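/- Fix points y_1,…,y_N ∈ ℝ^p and a pairwise distinct point set x'_1,…,x'_n ∈ ℝ^p with x'_i ≠ y_m for all i, m. Let x_i = M_i({x'_j}; {y_m}) = ( Σ_{m=1}^N ‖x'_i − y_m‖₂^{−1} )^{−1} ( (N/n) Σ_{j≠i} (x'_i − x'_j)/‖x'_i − x'_j‖₂ + Σ_{m=1}^N y_m/‖x'_i − y_m‖₂ ) for i = 1,…,n. Then the update has the descent property Ê({x_i}_{i=1}^n; {y_m}) ≤ Ê({x'_j}_{j=1}^n; {y_m}). -/

import Mathlib

open Finset

/-- The empirical energy objective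
`Ê({xᵢ}; {yₘ}) = (2/(nN)) Σᵢ Σₘ ‖yₘ − xᵢ‖ − (1/n²) Σᵢ Σⱼ ‖xᵢ − xⱼ‖`. -/
noncomputable def Ehat {p n N : ℕ} (x : Fin n → EuclideanSpace ℝ (Fin p))
    (y : Fin N → EuclideanSpace ℝ (Fin p)) : ℝ :=
  (2 / ((n : ℝ) * N)) * ∑ i, ∑ m, ‖y m - x i‖
    - (1 / (n : ℝ) ^ 2) * ∑ i, ∑ j, ‖x i - x j‖

/-- The closed-form update map `Mᵢ({x'ⱼ}; {yₘ})`. -/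
noncomputable def Mmap {p n N : ℕ} (x' : Fin n → EuclideanSpace ℝ (Fin p))
    (y : Fin N → EuclideanSpace ℝ (Fin p)) (i : Fin n) :
    EuclideanSpace ℝ (Fin p) :=
  (∑ m, ‖x' i - y m‖⁻¹)⁻¹ •
    (((N : ℝ) / n) • ∑ j ∈ Finset.univ.erase i, ‖x' i - x' j‖⁻¹ • (x' i - x' j)
      + ∑ m, ‖x' i - y m‖⁻¹ • y m)

section AuxLemmas

open RealInnerProductSpace

variable {E : Type*} [NormedAddCommGroup E] [InnerProductSpace ℝ E]

lemma aux_two_norm_le (a b : E) (hb : b ≠ 0) : 2 * ‖a‖ ≤ ‖b‖ + ‖a‖ ^ 2 / ‖b‖ := by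
  have hb' : (0:ℝ) < ‖b‖ := norm_pos_iff.mpr hb
  rw [← sub_nonneg]
  have h : ‖b‖ + ‖a‖ ^ 2 / ‖b‖ - 2 * ‖a‖ = (‖b‖ ^ 2 + ‖a‖ ^ 2 - 2 * ‖a‖ * ‖b‖) / ‖b‖ := by
    field_simp
  rw [h]
  apply div_nonneg _ hb'.le
  nlinarith [sq_nonneg (‖a‖ - ‖b‖)]

lemma aux_inner_unit_le (w v : E) : ⟪‖w‖⁻¹ • w, v⟫ ≤ ‖v‖ := by
  rw [real_inner_smul_left]
  rcases eq_or_ne w 0 with h | h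
  · simp [h]
  · have hw : (0:ℝ) < ‖w‖ := norm_pos_iff.mpr h
    have h1 : ‖w‖⁻¹ * ⟪w, v⟫ ≤ ‖w‖⁻¹ * (‖w‖ * ‖v‖) :=
      mul_le_mul_of_nonneg_left (real_inner_le_norm w v) (by positivity)
    have h2 : ‖w‖⁻¹ * (‖w‖ * ‖v‖) = ‖v‖ := by field_simp
    linarith

lemma aux_quad_min (c : ℝ) (hc : 0 ≤ c) (b M z : E) (hM : c • M = b) :
    c * ‖M‖ ^ 2 - 2 * ⟪b, M⟫ ≤ c * ‖z‖ ^ 2 - 2 * ⟪b, z⟫ := by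
  have h1 : ⟪b, z⟫ = c * ⟪M, z⟫ := by rw [← hM, real_inner_smul_left]
  have h2 : ⟪b, M⟫ = c * ‖M‖ ^ 2 := by
    rw [← hM, real_inner_smul_left, real_inner_self_eq_norm_sq]
  have h3 : ‖z - M‖ ^ 2 = ‖z‖ ^ 2 - 2 * ⟪z, M⟫ + ‖M‖ ^ 2 := norm_sub_sq_real z M
  have h4 : ⟪z, M⟫ = ⟪M, z⟫ := real_inner_comm M z
  nlinarith [mul_nonneg hc (sq_nonneg ‖z - M‖)]

lemma aux_inv_mul_sq (r : ℝ) : r⁻¹ * r ^ 2 = r := by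
  rcases eq_or_ne r 0 with h | h
  · simp [h]
  · field_simp

end AuxLemmas

section Surrogate

open RealInnerProductSpace

/-- Unit direction vectors. -/
noncomputable def uvec {p n : ℕ} (x' : Fin n → EuclideanSpace ℝ (Fin p)) (i j : Fin n) :
    EuclideanSpace ℝ (Fin p) :=
  ‖x' i - x' j‖⁻¹ • (x' i - x' j)

/-- The MM surrogate function. -/
noncomputable def gsur {p n N : ℕ} (x' : Fin n → EuclideanSpace ℝ (Fin p))
    (y : Fin N → EuclideanSpace ℝ (Fin p)) (x : Fin n → EuclideanSpace ℝ (Fin p)) : ℝ :=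
  (1 / ((n : ℝ) * N)) * ∑ i, ∑ m, (‖x' i - y m‖ + ‖x i - y m‖ ^ 2 / ‖x' i - y m‖)
    - (1 / (n : ℝ) ^ 2) * ∑ i, ∑ j, ⟪uvec x' i j, x i - x j⟫

lemma gsur_majorizes {p n N : ℕ} (x' x : Fin n → EuclideanSpace ℝ (Fin p))
    (y : Fin N → EuclideanSpace ℝ (Fin p)) (hxy : ∀ i m, x' i ≠ y m) :
    Ehat x y ≤ gsur x' y x := by
  unfold Ehat gsur
  apply sub_le_sub
  · have h2 : ∑ i, ∑ m, (2 * ‖x i - y m‖)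
        ≤ ∑ i, ∑ m, (‖x' i - y m‖ + ‖x i - y m‖ ^ 2 / ‖x' i - y m‖) := by
      refine sum_le_sum fun i _ => sum_le_sum fun m _ => ?_
      exact aux_two_norm_le (x i - y m) (x' i - y m) (sub_ne_zero.mpr (hxy i m))
    have e1 : (2 / ((n : ℝ) * N)) * ∑ i, ∑ m, ‖y m - x i‖
        = (1 / ((n : ℝ) * N)) * ∑ i, ∑ m, (2 * ‖x i - y m‖) := by
      have : ∀ i : Fin n, ∑ m, (2 * ‖x i - y m‖) = 2 * ∑ m, ‖y m - x i‖ := by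
        intro i
        rw [mul_sum]
        exact sum_congr rfl fun m _ => by rw [norm_sub_rev]
      rw [sum_congr rfl fun i _ => this i, ← mul_sum]
      ring
    rw [e1]
    exact mul_le_mul_of_nonneg_left h2 (by positivity)
  · refine mul_le_mul_of_nonneg_left ?_ (by positivity)
    exact sum_le_sum fun i _ => sum_le_sum fun j _ =>
      aux_inner_unit_le (x' i - x' j) (x i - x j)

lemma gsur_eq {p n N : ℕ} (x' : Fin n → EuclideanSpace ℝ (Fin p))
    (y : Fin N → EuclideanSpace ℝ (Fin p)) (hxy : ∀ i m, x' i ≠ y m) :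
    gsur x' y x' = Ehat x' y := by
  unfold gsur Ehat
  congr 1
  · have h1 : ∀ (i : Fin n) (m : Fin N),
        ‖x' i - y m‖ + ‖x' i - y m‖ ^ 2 / ‖x' i - y m‖ = 2 * ‖y m - x' i‖ := by
      intro i m
      have h0 : ‖x' i - y m‖ ≠ 0 := norm_ne_zero_iff.mpr (sub_ne_zero.mpr (hxy i m))
      rw [norm_sub_rev (x' i) (y m)] at h0 ⊢
      field_simp
      ring
    rw [sum_congr rfl fun i _ => sum_congr rfl fun m _ => h1 i m]
    rw [show ∑ i : Fin n, ∑ m : Fin N, (2 * ‖y m - x' i‖)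
        = 2 * ∑ i : Fin n, ∑ m : Fin N, ‖y m - x' i‖ by
      rw [mul_sum]; exact sum_congr rfl fun i _ => (mul_sum _ _ _).symm]
    ring
  · congr 1
    refine sum_congr rfl fun i _ => sum_congr rfl fun j _ => ?_
    show ⟪‖x' i - x' j‖⁻¹ • (x' i - x' j), x' i - x' j⟫ = ‖x' i - x' j‖
    rw [real_inner_smul_left, real_inner_self_eq_norm_sq]
    exact aux_inv_mul_sq _

lemma gsur_separable {p n N : ℕ} (x' x : Fin n → EuclideanSpace ℝ (Fin p))
    (y : Fin N → EuclideanSpace ℝ (Fin p)) :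
    gsur x' y x
      = (1 / ((n : ℝ) * N)) * ∑ i, ∑ m, ‖x' i - y m‖
        + ∑ i, ((1 / ((n : ℝ) * N)) * ∑ m, ‖x' i - y m‖⁻¹ * ‖x i - y m‖ ^ 2
            - (2 / (n : ℝ) ^ 2) * ⟪∑ j, uvec x' i j, x i⟫) := by
  have anti : ∀ i j, uvec x' j i = -uvec x' i j := by
    intro i j
    unfold uvec
    rw [norm_sub_rev (x' j) (x' i), show x' j - x' i = -(x' i - x' j) by abel, smul_neg]
  -- the inner product double sum telescopes to twice the diagonal-coupled sum
  have key : ∑ i, ∑ j, ⟪uvec x' i j, x i - x j⟫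
      = 2 * ∑ i, ⟪∑ j, uvec x' i j, x i⟫ := by
    have e1 : ∑ i, ∑ j, ⟪uvec x' i j, x i - x j⟫
        = ∑ i, ∑ j, ⟪uvec x' i j, x i⟫ - ∑ i, ∑ j, ⟪uvec x' i j, x j⟫ := by
      rw [← Finset.sum_sub_distrib]
      refine sum_congr rfl fun i _ => ?_
      rw [← Finset.sum_sub_distrib]
      exact sum_congr rfl fun j _ => inner_sub_right _ _ _
    have e2 : ∑ i, ∑ j, ⟪uvec x' i j, x j⟫
        = - ∑ i, ∑ j, ⟪uvec x' i j, x i⟫ := by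
      rw [Finset.sum_comm]
      rw [show (∑ j, ∑ i, ⟪uvec x' i j, x j⟫ : ℝ) = ∑ i, ∑ j, ⟪uvec x' j i, x i⟫ from rfl]
      rw [← Finset.sum_neg_distrib]
      refine sum_congr rfl fun i _ => ?_
      rw [← Finset.sum_neg_distrib]
      refine sum_congr rfl fun j _ => ?_
      rw [anti, inner_neg_left]
    have e3 : ∀ i, ⟪∑ j, uvec x' i j, x i⟫ = ∑ j, ⟪uvec x' i j, x i⟫ := fun i =>
      sum_inner _ _ _
    rw [e1, e2, sub_neg_eq_add, mul_sum, ← Finset.sum_add_distrib]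
    exact sum_congr rfl fun i _ => by rw [e3 i]; ring
  unfold gsur
  rw [key]
  have split : ∑ i, ∑ m, (‖x' i - y m‖ + ‖x i - y m‖ ^ 2 / ‖x' i - y m‖)
      = ∑ i, ∑ m, ‖x' i - y m‖ + ∑ i, ∑ m, ‖x' i - y m‖⁻¹ * ‖x i - y m‖ ^ 2 := by
    rw [← Finset.sum_add_distrib]
    refine sum_congr rfl fun i _ => ?_
    rw [← Finset.sum_add_distrib]
    exact sum_congr rfl fun m _ => by rw [div_eq_inv_mul]
  rw [split]
  rw [Finset.sum_sub_distrib]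
  rw [← mul_sum, ← mul_sum]
  ring
end Surrogate

section StepC

open RealInnerProductSpace

lemma gsur_min {p n N : ℕ} (hn : 0 < n) (hN : 0 < N)
    (x' : Fin n → EuclideanSpace ℝ (Fin p))
    (y : Fin N → EuclideanSpace ℝ (Fin p))
    (hxy : ∀ i m, x' i ≠ y m) :
    gsur x' y (Mmap x' y) ≤ gsur x' y x' := by
  rw [gsur_separable, gsur_separable]
  apply add_le_add_right
  refine sum_le_sum fun i _ => ?_
  set w : Fin N → ℝ := fun m => ‖x' i - y m‖⁻¹ with hw
  have wpos : ∀ m, 0 < w m := fun m => by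
    have : ‖x' i - y m‖ ≠ 0 := norm_ne_zero_iff.mpr (sub_ne_zero.mpr (hxy i m))
    have : 0 < ‖x' i - y m‖ := lt_of_le_of_ne (norm_nonneg _) (Ne.symm this)
    exact inv_pos.mpr this
  set W : ℝ := ∑ m, w m with hW
  have Wpos : 0 < W := Finset.sum_pos (fun m _ => wpos m) ⟨⟨0, hN⟩, mem_univ _⟩
  set S : EuclideanSpace ℝ (Fin p) := ∑ j, uvec x' i j with hS
  set c : ℝ := (1 / ((n : ℝ) * N)) * W with hc
  have cpos : 0 ≤ c := by positivity
  set b : EuclideanSpace ℝ (Fin p) :=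
    (1 / ((n : ℝ) * N)) • (∑ m, w m • y m) + (1 / (n : ℝ) ^ 2) • S with hb
  have hn' : (n : ℝ) ≠ 0 := Nat.cast_ne_zero.mpr hn.ne'
  have hN' : (N : ℝ) ≠ 0 := Nat.cast_ne_zero.mpr hN.ne'
  -- the update point is the minimizer: c • M = b
  have hMb : c • Mmap x' y i = b := by
    unfold Mmap
    have herase : ∑ j ∈ Finset.univ.erase i, ‖x' i - x' j‖⁻¹ • (x' i - x' j) = S := by
      rw [hS]
      refine Finset.sum_erase _ ?_
      simp [uvec]
    rw [herase]
    rw [smul_smul]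
    have : c * (∑ m, ‖x' i - y m‖⁻¹)⁻¹ = 1 / ((n : ℝ) * N) := by
      rw [hc, ← hw, ← hW]
      field_simp
    rw [this, smul_add, smul_smul]
    have : 1 / ((n : ℝ) * N) * ((N : ℝ) / n) = 1 / (n : ℝ) ^ 2 := by
      field_simp
    rw [this, hb]
    exact add_comm _ _
  -- quadratic normal form of the per-point surrogate
  have key : ∀ z : EuclideanSpace ℝ (Fin p),
      (1 / ((n : ℝ) * N)) * ∑ m, w m * ‖z - y m‖ ^ 2 - (2 / (n : ℝ) ^ 2) * ⟪S, z⟫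
        = c * ‖z‖ ^ 2 - 2 * ⟪b, z⟫ + (1 / ((n : ℝ) * N)) * ∑ m, w m * ‖y m‖ ^ 2 := by
    intro z
    have e1 : ⟪b, z⟫ = (1 / ((n : ℝ) * N)) * ∑ m, w m * ⟪y m, z⟫
        + (1 / (n : ℝ) ^ 2) * ⟪S, z⟫ := by
      rw [hb, inner_add_left, real_inner_smul_left, real_inner_smul_left, sum_inner]
      congr 2
      exact sum_congr rfl fun m _ => real_inner_smul_left _ _ _
    have e2 : ∀ m, w m * ‖z - y m‖ ^ 2
        = w m * ‖z‖ ^ 2 - 2 * (w m * ⟪y m, z⟫) + w m * ‖y m‖ ^ 2 := by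
      intro m
      rw [norm_sub_sq_real, real_inner_comm]
      ring
    rw [sum_congr rfl fun m _ => e2 m, e1]
    simp only [hc, hW, Finset.sum_add_distrib, Finset.sum_sub_distrib, ← Finset.sum_mul,
      ← Finset.mul_sum]
    ring
  have := aux_quad_min c cpos b (Mmap x' y i) (x' i) hMb
  have k1 := key (Mmap x' y i)
  have k2 := key (x' i)
  linarith
end StepC

/-- descent property: the closed-form update `xᵢ = Mᵢ({x'ⱼ};{yₘ})`
does not increase the empirical energy objective:
`Ê({xᵢ}; {yₘ}) ≤ Ê({x'ⱼ}; {yₘ})`. -/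
theorem closed_form_update_descent {p n N : ℕ}
    (hn : 0 < n) (hN : 0 < N)
    (x' : Fin n → EuclideanSpace ℝ (Fin p))
    (y : Fin N → EuclideanSpace ℝ (Fin p))
    (hdistinct : Function.Injective x')
    (hxy : ∀ i m, x' i ≠ y m) :
    Ehat (Mmap x' y) y ≤ Ehat x' y := by
  calc Ehat (Mmap x' y) y ≤ gsur x' y (Mmap x' y) := gsur_majorizes x' _ y hxy
    _ ≤ gsur x' y x' := gsur_min hn hN x' y hxy
    _ = Ehat x' y := gsur_eq x' y hxy
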